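/- (Theorem 1, boundedness of sequence, part (i).) Under Assumption A, the gap between consecutive iterates converges to zero: x^{t+1} − x^t → 0 as t → ∞ (equivalently ‖Δ^{(t)}‖ → 0). -/

import Mathlib

open scoped RealInnerProductSpace

section Helpers

variable {E : Type*} [NormedAddCommGroup E] [InnerProductSpace ℝ E] [CompleteSpace E]

lemma line_hasDerivAt_aux (f : E → ℝ) (hf : Differentiable ℝ f) (x v : E) (s : ℝ) :
    HasDerivAt (fun t : ℝ => f (x + t • v)) ⟪gradient f (x + s • v), v⟫ s := by
  have h1 : HasFDerivAt f ((InnerProductSpace.toDual ℝ E) (gradient f (x + s • v))) (x + s • v) :=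
    ((hf _).hasGradientAt).hasFDerivAt
  have h2 : HasDerivAt (fun t : ℝ => x + t • v) v s := by
    simpa using ((hasDerivAt_id s).smul_const v).const_add x
  exact h1.comp_hasDerivAt s h2

lemma descent_upper_aux (f : E → ℝ) (hf : Differentiable ℝ f) {L : ℝ}
    (hlip : ∀ u v, ‖gradient f u - gradient f v‖ ≤ L * ‖u - v‖) (x y : E) :
    f y ≤ f x + ⟪gradient f x, y - x⟫ + L / 2 * ‖y - x‖ ^ 2 := by
  set v := y - x with hv
  set ψ : ℝ → ℝ := fun t => f (x + t • v) - t * ⟪gradient f x, v⟫ - t ^ 2 * (L / 2 * ‖v‖ ^ 2) with hψ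
  have hD : ∀ s : ℝ, HasDerivAt ψ
      (⟪gradient f (x + s • v), v⟫ - ⟪gradient f x, v⟫ - 2 * s * (L / 2 * ‖v‖ ^ 2)) s := by
    intro s
    have := line_hasDerivAt_aux f hf x v s
    have h2 : HasDerivAt (fun t : ℝ => t * ⟪gradient f x, v⟫) ⟪gradient f x, v⟫ s := by
      simpa using (hasDerivAt_id s).mul_const _
    have h3 : HasDerivAt (fun t : ℝ => t ^ 2 * (L / 2 * ‖v‖ ^ 2)) (2 * s * (L / 2 * ‖v‖ ^ 2)) s := by
      simpa using ((hasDerivAt_pow 2 s).mul_const (L / 2 * ‖v‖ ^ 2))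
    exact (this.sub h2).sub h3
  have hmono : AntitoneOn ψ (Set.Icc (0:ℝ) 1) := by
    apply antitoneOn_of_deriv_nonpos (convex_Icc 0 1)
    · exact fun s _ => ((hD s).continuousAt).continuousWithinAt
    · exact fun s _ => ((hD s).differentiableAt).differentiableWithinAt
    · intro s hs
      rw [interior_Icc] at hs
      rw [(hD s).deriv]
      have h1 : ⟪gradient f (x + s • v), v⟫ - ⟪gradient f x, v⟫ ≤ L * s * ‖v‖ ^ 2 := by
        rw [← inner_sub_left]
        calc ⟪gradient f (x + s • v) - gradient f x, v⟫
            ≤ ‖gradient f (x + s • v) - gradient f x‖ * ‖v‖ := real_inner_le_norm _ _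
          _ ≤ (L * ‖x + s • v - x‖) * ‖v‖ := by
              have := hlip (x + s • v) x
              nlinarith [norm_nonneg v]
          _ = L * s * ‖v‖ ^ 2 := by
              rw [add_sub_cancel_left, norm_smul, Real.norm_eq_abs, abs_of_pos hs.1]
              ring
      nlinarith
  have := hmono (Set.left_mem_Icc.2 zero_le_one) (Set.right_mem_Icc.2 zero_le_one) zero_le_one
  simp only [hψ, one_smul, zero_smul, add_zero, one_pow, one_mul, zero_pow, zero_mul,
    sub_zero] at this
  have hxy : x + v = y := by rw [hv]; abel
  rw [hxy] at this
  linarith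

lemma descent_lower_aux (f : E → ℝ) (hf : Differentiable ℝ f) {L : ℝ}
    (hlip : ∀ u v, ‖gradient f u - gradient f v‖ ≤ L * ‖u - v‖) (x y : E) :
    f x + ⟪gradient f x, y - x⟫ - L / 2 * ‖y - x‖ ^ 2 ≤ f y := by
  set v := y - x with hv
  set ψ : ℝ → ℝ := fun t => f (x + t • v) - t * ⟪gradient f x, v⟫ + t ^ 2 * (L / 2 * ‖v‖ ^ 2) with hψ
  have hD : ∀ s : ℝ, HasDerivAt ψ
      (⟪gradient f (x + s • v), v⟫ - ⟪gradient f x, v⟫ + 2 * s * (L / 2 * ‖v‖ ^ 2)) s := by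
    intro s
    have := line_hasDerivAt_aux f hf x v s
    have h2 : HasDerivAt (fun t : ℝ => t * ⟪gradient f x, v⟫) ⟪gradient f x, v⟫ s := by
      simpa using (hasDerivAt_id s).mul_const _
    have h3 : HasDerivAt (fun t : ℝ => t ^ 2 * (L / 2 * ‖v‖ ^ 2)) (2 * s * (L / 2 * ‖v‖ ^ 2)) s := by
      simpa using ((hasDerivAt_pow 2 s).mul_const (L / 2 * ‖v‖ ^ 2))
    exact (this.sub h2).add h3
  have hmono : MonotoneOn ψ (Set.Icc (0:ℝ) 1) := by
    apply monotoneOn_of_deriv_nonneg (convex_Icc 0 1)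
    · exact fun s _ => ((hD s).continuousAt).continuousWithinAt
    · exact fun s _ => ((hD s).differentiableAt).differentiableWithinAt
    · intro s hs
      rw [interior_Icc] at hs
      rw [(hD s).deriv]
      have h1 : ⟪gradient f x, v⟫ - ⟪gradient f (x + s • v), v⟫ ≤ L * s * ‖v‖ ^ 2 := by
        rw [← inner_sub_left]
        calc ⟪gradient f x - gradient f (x + s • v), v⟫
            ≤ ‖gradient f x - gradient f (x + s • v)‖ * ‖v‖ := real_inner_le_norm _ _
          _ ≤ (L * ‖x - (x + s • v)‖) * ‖v‖ := by
              have := hlip x (x + s • v)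
              nlinarith [norm_nonneg v]
          _ = L * s * ‖v‖ ^ 2 := by
              rw [show x - (x + s • v) = -(s • v) by abel, norm_neg, norm_smul,
                Real.norm_eq_abs, abs_of_pos hs.1]
              ring
      nlinarith
  have := hmono (Set.left_mem_Icc.2 zero_le_one) (Set.right_mem_Icc.2 zero_le_one) zero_le_one
  simp only [hψ, one_smul, zero_smul, add_zero, one_pow, one_mul, zero_pow, zero_mul,
    sub_zero] at this
  have hxy : x + v = y := by rw [hv]; abel
  rw [hxy] at this
  linarith

lemma weak_cvx_aux (f : E → ℝ) (hf : Differentiable ℝ f) {L : ℝ}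
    (hlip : ∀ u v, ‖gradient f u - gradient f v‖ ≤ L * ‖u - v‖) (a b : E)
    {lam : ℝ} (h0 : 0 ≤ lam) (h1 : lam ≤ 1) :
    f (lam • a + (1 - lam) • b) ≤ lam * f a + (1 - lam) * f b
      + L / 2 * (lam * (1 - lam)) * ‖a - b‖ ^ 2 := by
  set z := lam • a + (1 - lam) • b with hz
  have hza : a - z = (1 - lam) • (a - b) := by rw [hz]; module
  have hzb : b - z = lam • (b - a) := by rw [hz]; module
  have ha := descent_lower_aux f hf hlip z a
  have hb := descent_lower_aux f hf hlip z b
  rw [hza] at ha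
  rw [hzb] at hb
  rw [real_inner_smul_right] at ha hb
  rw [norm_smul, Real.norm_eq_abs, abs_of_nonneg (by linarith : (0:ℝ) ≤ 1 - lam)] at ha
  rw [norm_smul, Real.norm_eq_abs, abs_of_nonneg h0] at hb
  have hba : ‖b - a‖ = ‖a - b‖ := norm_sub_rev _ _
  rw [hba] at hb
  rw [show b - a = -(a - b) by abel, inner_neg_right] at hb
  nlinarith [mul_le_mul_of_nonneg_left ha h0,
    mul_le_mul_of_nonneg_left hb (by linarith : (0:ℝ) ≤ 1 - lam),
    sq_nonneg ‖a - b‖]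

lemma stepA_aux (f hh : E → ℝ) (hf : Differentiable ℝ f) {L γ ρ : ℝ}
    (hlipf : ∀ u v, ‖gradient f u - gradient f v‖ ≤ L * ‖u - v‖)
    (a b w : E)
    (hstr : StrongConvexOn Set.univ γ (fun y => hh y + ρ / 2 * ‖y - a‖ ^ 2))
    {lam : ℝ} (h0 : 0 < lam) (h1 : lam ≤ 1)
    (hmin : ∀ y, f b + hh b + ρ / 2 * ‖b - a‖ ^ 2 + ⟪w, b - a⟫ ≤
      f y + hh y + ρ / 2 * ‖y - a‖ ^ 2 + ⟪w, y - a⟫) :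
    f b + hh b + ρ / 2 * ‖b - a‖ ^ 2 + ⟪w, b - a⟫ + (1 - lam) * (γ - L) / 2 * ‖b - a‖ ^ 2
      ≤ f a + hh a := by
  set y := lam • a + (1 - lam) • b with hy
  have hmin' := hmin y
  have hstr' := hstr.2 (Set.mem_univ a) (Set.mem_univ b) h0.le
    (by linarith : (0:ℝ) ≤ 1 - lam) (by ring)
  simp only [smul_eq_mul, sub_self, norm_zero] at hstr'
  have hwc := weak_cvx_aux f hf hlipf a b h0.le h1
  have hya : y - a = (1 - lam) • (b - a) := by rw [hy]; module
  have hinner : ⟪w, y - a⟫ = (1 - lam) * ⟪w, b - a⟫ := by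
    rw [hya, real_inner_smul_right]
  have hnorm : ‖y - a‖ ^ 2 = (1 - lam) ^ 2 * ‖b - a‖ ^ 2 := by
    rw [hya, norm_smul, Real.norm_eq_abs, mul_pow, sq_abs]
  have hab : ‖a - b‖ = ‖b - a‖ := norm_sub_rev _ _
  rw [hinner, hnorm] at hmin'
  rw [hab] at hstr' hwc
  rw [← hy] at hstr' hwc
  rw [hnorm] at hstr'
  have hfin : lam * (f b + hh b + ρ / 2 * ‖b - a‖ ^ 2 + ⟪w, b - a⟫
      + (1 - lam) * (γ - L) / 2 * ‖b - a‖ ^ 2) ≤ lam * (f a + hh a) := by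
    nlinarith [hmin', hstr', hwc]
  exact le_of_mul_le_mul_left hfin h0

omit [InnerProductSpace ℝ E] [CompleteSpace E] in
lemma telescope_norm_aux (x : ℕ → E) : ∀ s t : ℕ, s ≤ t →
    ‖x t - x s‖ ≤ ∑ u ∈ Finset.Ico s t, ‖x (u + 1) - x u‖ := by
  intro s t hst
  induction t, hst using Nat.le_induction with
  | base => simp
  | succ t hst ih =>
    rw [Finset.sum_Ico_succ_top (by omega : s ≤ t)]
    calc ‖x (t + 1) - x s‖ ≤ ‖x t - x s‖ + ‖x (t + 1) - x t‖ := by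
          have := norm_add_le (x t - x s) (x (t + 1) - x t)
          simpa [show x t - x s + (x (t+1) - x t) = x (t+1) - x s by abel, add_comm] using this
      _ ≤ _ := by linarith

lemma double_sum_le_aux (d : ℕ → ℝ) (hd : ∀ s, 0 ≤ d s) (τ T : ℕ) :
    ∑ t ∈ Finset.range T, ∑ s ∈ Finset.Ico (t - τ) t, d s
      ≤ (τ : ℝ) * ∑ s ∈ Finset.range T, d s := by
  have step1 : ∀ t ∈ Finset.range T, ∑ s ∈ Finset.Ico (t - τ) t, d s
      = ∑ s ∈ Finset.range T, if s ∈ Finset.Ico (t - τ) t then d s else 0 := by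
    intro t ht
    rw [Finset.sum_ite_mem]
    congr 1
    symm
    rw [Finset.inter_eq_right]
    intro s hs
    simp only [Finset.mem_Ico] at hs
    simp only [Finset.mem_range] at ht ⊢
    omega
  rw [Finset.sum_congr rfl step1, Finset.sum_comm]
  have step2 : ∀ s ∈ Finset.range T,
      (∑ t ∈ Finset.range T, if s ∈ Finset.Ico (t - τ) t then d s else 0) ≤ (τ : ℝ) * d s := by
    intro s _
    rw [← Finset.sum_filter, Finset.sum_const]
    have hcard : ((Finset.range T).filter (fun t => s ∈ Finset.Ico (t - τ) t)).card ≤ τ := by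
      have hsub : ((Finset.range T).filter (fun t => s ∈ Finset.Ico (t - τ) t))
          ⊆ Finset.Ioc s (s + τ) := by
        intro t ht
        simp only [Finset.mem_filter, Finset.mem_range, Finset.mem_Ico] at ht
        simp only [Finset.mem_Ioc]
        omega
      calc _ ≤ (Finset.Ioc s (s + τ)).card := Finset.card_le_card hsub
        _ = τ := by rw [Nat.card_Ioc]; omega
    rw [nsmul_eq_mul]
    exact mul_le_mul_of_nonneg_right (by exact_mod_cast hcard) (hd s)
  calc _ ≤ ∑ s ∈ Finset.range T, (τ : ℝ) * d s := Finset.sum_le_sum step2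
    _ = (τ : ℝ) * ∑ s ∈ Finset.range T, d s := by rw [Finset.mul_sum]

lemma young_aux {δ L a b : ℝ} (hδ : 0 < δ) (hL : 0 ≤ L) :
    2 * L * (a * b) ≤ L * δ * a ^ 2 + L / δ * b ^ 2 := by
  have key : L * δ * a ^ 2 + L / δ * b ^ 2 - 2 * L * (a * b) = L * ((δ * a - b) ^ 2 / δ) := by
    field_simp
    ring
  have h2 : 0 ≤ L * ((δ * a - b) ^ 2 / δ) :=
    mul_nonneg hL (div_nonneg (sq_nonneg _) hδ.le)
  linarith

end Helpers

set_option maxHeartbeats 2000000 in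
theorem stmt_6
    {p m τ : ℕ} (hp : 1 ≤ p) (hm : 0 < m)
    {L ρ γ : ℝ}
    (hL : 0 < L) (hρ : 0 < ρ) (hγ : 0 < γ)
    (Lf : Fin m → EuclideanSpace ℝ (Fin p) → ℝ)
    (hdiff : ∀ j, Differentiable ℝ (Lf j))
    (hlip : ∀ j (u v : EuclideanSpace ℝ (Fin p)), ‖gradient (Lf j) u - gradient (Lf j) v‖ ≤ L * ‖u - v‖)
    (h : EuclideanSpace ℝ (Fin p) → ℝ)
    (hconv : ConvexOn ℝ Set.univ h)
    (hstrong : ∀ z : EuclideanSpace ℝ (Fin p), StrongConvexOn Set.univ γ (fun y => h y + ρ / 2 * ‖y - z‖ ^ 2))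
    (tj : ℕ → Fin m → ℕ)
    (htj : ∀ t j, t - τ ≤ tj t j ∧ tj t j ≤ t)
    (x : ℕ → EuclideanSpace ℝ (Fin p))
    (hupdate : ∀ t, ∀ y : EuclideanSpace ℝ (Fin p),
      Lf ⟨0, hm⟩ (x (t + 1)) + h (x (t + 1)) + ρ / 2 * ‖x (t + 1) - x t‖ ^ 2 +
          ⟪((m : ℝ)⁻¹ • ∑ j, gradient (Lf j) (x (tj t j))) - gradient (Lf ⟨0, hm⟩) (x (tj t ⟨0, hm⟩)), x (t + 1) - x t⟫ ≤
        Lf ⟨0, hm⟩ y + h y + ρ / 2 * ‖y - x t‖ ^ 2 +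
          ⟪((m : ℝ)⁻¹ • ∑ j, gradient (Lf j) (x (tj t j))) - gradient (Lf ⟨0, hm⟩) (x (tj t ⟨0, hm⟩)), y - x t⟫)
    (δ : ℝ) (hδ : 0 < δ)
    (hA1 : 3 * L + 2 * L * δ * τ < γ)
    (hA2 : 2 * L * τ / δ < ρ)
    (Llo : ℝ) (hLlo : ∀ y : EuclideanSpace ℝ (Fin p), Llo < (((m : ℝ)⁻¹ * ∑ j, Lf j (y)) + h (y)))
    :
    Filter.Tendsto (fun t => x (t + 1) - x t) Filter.atTop (nhds 0) := by
  classical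
  have hτnn : (0:ℝ) ≤ (τ : ℝ) := Nat.cast_nonneg τ
  have hγL : L < γ := by
    have h0 : (0:ℝ) ≤ 2 * L * δ * τ := by positivity
    linarith
  have hε₁ : 0 < ρ / 2 - L * τ / δ := by
    have h2 : 2 * L * (τ:ℝ) / δ = 2 * (L * τ / δ) := by ring
    rw [h2] at hA2
    linarith
  set lam : ℝ := min (1 / 2) ((ρ / 2 - L * τ / δ) / (γ - L)) with hlam_def
  have hlam0 : 0 < lam := lt_min (by norm_num) (div_pos hε₁ (by linarith))
  have hlam1 : lam ≤ 1 / 2 := min_le_left _ _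
  have hlamε : lam * (γ - L) ≤ ρ / 2 - L * τ / δ := by
    have hle := min_le_right (1/2 : ℝ) ((ρ / 2 - L * τ / δ) / (γ - L))
    calc lam * (γ - L) ≤ ((ρ / 2 - L * τ / δ) / (γ - L)) * (γ - L) :=
        mul_le_mul_of_nonneg_right hle (by linarith)
      _ = ρ / 2 - L * τ / δ := div_mul_cancel₀ _ (ne_of_gt (by linarith : (0:ℝ) < γ - L))
  -- abbreviations
  set d : ℕ → ℝ := fun t => ‖x (t + 1) - x t‖ ^ 2 with hd_def
  have hdnn : ∀ t, 0 ≤ d t := fun t => sq_nonneg _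
  set Lag : EuclideanSpace ℝ (Fin p) → ℝ := fun y => (m:ℝ)⁻¹ * ∑ j, Lf j y + h y with hLag_def
  have hm1 : (m:ℝ)⁻¹ * (m:ℝ) = 1 := inv_mul_cancel₀ (Nat.cast_ne_zero.mpr hm.ne')
  have hminv : (0:ℝ) ≤ (m:ℝ)⁻¹ := inv_nonneg.mpr (Nat.cast_nonneg m)
  set c : ℝ := ρ / 2 + (1 - lam) * (γ - L) / 2 - L - L * τ / δ with hc_def
  have hc : L * δ * τ < c := by
    rw [hc_def]
    nlinarith [hlamε, hA1, hε₁]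
  -- key per-step inequality
  have key : ∀ t, Lag (x (t + 1)) ≤ Lag (x t) - c * d t
      + L * δ * ∑ s ∈ Finset.Ico (t - τ) t, d s := by
    intro t
    simp only [hLag_def, hc_def, hd_def]
    set w : EuclideanSpace ℝ (Fin p) :=
      ((m : ℝ)⁻¹ • ∑ j, gradient (Lf j) (x (tj t j))) - gradient (Lf ⟨0, hm⟩) (x (tj t ⟨0, hm⟩)) with hw_def
    have hA := stepA_aux (Lf ⟨0, hm⟩) h (hdiff ⟨0, hm⟩) (hlip ⟨0, hm⟩) (x t) (x (t + 1)) w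
      (hstrong (x t)) hlam0 (by linarith) (hupdate t)
    -- averaged descent
    have hBsum : ∑ j, Lf j (x (t + 1)) ≤ ∑ j, Lf j (x t)
        + ∑ j, ⟪gradient (Lf j) (x t), x (t + 1) - x t⟫
        + (m:ℝ) * (L / 2 * ‖x (t + 1) - x t‖ ^ 2) := by
      have h1 : ∑ j, Lf j (x (t + 1)) ≤ ∑ j, (Lf j (x t)
          + ⟪gradient (Lf j) (x t), x (t + 1) - x t⟫ + L / 2 * ‖x (t + 1) - x t‖ ^ 2) :=
        Finset.sum_le_sum fun j _ => descent_upper_aux (Lf j) (hdiff j) (hlip j) (x t) (x (t + 1))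
      have h2 : ∑ j, (Lf j (x t)
          + ⟪gradient (Lf j) (x t), x (t + 1) - x t⟫ + L / 2 * ‖x (t + 1) - x t‖ ^ 2)
          = ∑ j, Lf j (x t) + ∑ j, ⟪gradient (Lf j) (x t), x (t + 1) - x t⟫
            + (m:ℝ) * (L / 2 * ‖x (t + 1) - x t‖ ^ 2) := by
        rw [Finset.sum_add_distrib, Finset.sum_add_distrib, Finset.sum_const, Finset.card_univ,
          Fintype.card_fin, nsmul_eq_mul]
      linarith
    have hBavg : (m:ℝ)⁻¹ * ∑ j, Lf j (x (t + 1)) ≤ (m:ℝ)⁻¹ * ∑ j, Lf j (x t)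
        + (m:ℝ)⁻¹ * ∑ j, ⟪gradient (Lf j) (x t), x (t + 1) - x t⟫
        + L / 2 * ‖x (t + 1) - x t‖ ^ 2 := by
      have h1 := mul_le_mul_of_nonneg_left hBsum hminv
      have h2 : (m:ℝ)⁻¹ * (∑ j, Lf j (x t)
          + ∑ j, ⟪gradient (Lf j) (x t), x (t + 1) - x t⟫
          + (m:ℝ) * (L / 2 * ‖x (t + 1) - x t‖ ^ 2))
          = (m:ℝ)⁻¹ * ∑ j, Lf j (x t)
          + (m:ℝ)⁻¹ * ∑ j, ⟪gradient (Lf j) (x t), x (t + 1) - x t⟫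
          + ((m:ℝ)⁻¹ * (m:ℝ)) * (L / 2 * ‖x (t + 1) - x t‖ ^ 2) := by ring
      rw [h2, hm1, one_mul] at h1
      exact h1
    have hB2 := descent_lower_aux (Lf ⟨0, hm⟩) (hdiff ⟨0, hm⟩) (hlip ⟨0, hm⟩) (x t) (x (t + 1))
    -- delayed gradient error
    set S : ℝ := ∑ s ∈ Finset.Ico (t - τ) t, ‖x (s + 1) - x s‖ with hS_def
    have hdelay : ∀ j : Fin m, ‖x t - x (tj t j)‖ ≤ S := by
      intro j
      calc ‖x t - x (tj t j)‖ ≤ ∑ u ∈ Finset.Ico (tj t j) t, ‖x (u + 1) - x u‖ :=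
            telescope_norm_aux x _ t (htj t j).2
        _ ≤ S := Finset.sum_le_sum_of_subset_of_nonneg
            (by intro u hu; simp only [Finset.mem_Ico] at *; have := (htj t j).1; omega)
            (fun _ _ _ => norm_nonneg _)
    have hgj : ∀ j : Fin m, ⟪gradient (Lf j) (x t) - gradient (Lf j) (x (tj t j)),
        x (t + 1) - x t⟫ ≤ L * S * ‖x (t + 1) - x t‖ := by
      intro j
      calc ⟪gradient (Lf j) (x t) - gradient (Lf j) (x (tj t j)), x (t + 1) - x t⟫
          ≤ ‖gradient (Lf j) (x t) - gradient (Lf j) (x (tj t j))‖ * ‖x (t + 1) - x t‖ :=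
            real_inner_le_norm _ _
        _ ≤ (L * ‖x t - x (tj t j)‖) * ‖x (t + 1) - x t‖ :=
            mul_le_mul_of_nonneg_right (hlip j _ _) (norm_nonneg _)
        _ ≤ L * S * ‖x (t + 1) - x t‖ :=
            mul_le_mul_of_nonneg_right
              (mul_le_mul_of_nonneg_left (hdelay j) hL.le) (norm_nonneg _)
    have hj0bound : ⟪gradient (Lf ⟨0, hm⟩) (x (tj t ⟨0, hm⟩)) - gradient (Lf ⟨0, hm⟩) (x t),
        x (t + 1) - x t⟫ ≤ L * S * ‖x (t + 1) - x t‖ := by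
      calc ⟪gradient (Lf ⟨0, hm⟩) (x (tj t ⟨0, hm⟩)) - gradient (Lf ⟨0, hm⟩) (x t), x (t + 1) - x t⟫
          ≤ ‖gradient (Lf ⟨0, hm⟩) (x (tj t ⟨0, hm⟩)) - gradient (Lf ⟨0, hm⟩) (x t)‖
            * ‖x (t + 1) - x t‖ := real_inner_le_norm _ _
        _ ≤ (L * ‖x (tj t ⟨0, hm⟩) - x t‖) * ‖x (t + 1) - x t‖ :=
            mul_le_mul_of_nonneg_right (hlip _ _ _) (norm_nonneg _)
        _ ≤ L * S * ‖x (t + 1) - x t‖ := by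
            rw [norm_sub_rev]
            exact mul_le_mul_of_nonneg_right
              (mul_le_mul_of_nonneg_left (hdelay _) hL.le) (norm_nonneg _)
    have hw_expand : ⟪w, x (t + 1) - x t⟫
        = (m:ℝ)⁻¹ * ∑ j, ⟪gradient (Lf j) (x (tj t j)), x (t + 1) - x t⟫
          - ⟪gradient (Lf ⟨0, hm⟩) (x (tj t ⟨0, hm⟩)), x (t + 1) - x t⟫ := by
      rw [hw_def, inner_sub_left, real_inner_smul_left, sum_inner]
    have hEsum : ∑ j, ⟪gradient (Lf j) (x t), x (t + 1) - x t⟫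
        - ∑ j, ⟪gradient (Lf j) (x (tj t j)), x (t + 1) - x t⟫
        ≤ (m:ℝ) * (L * S * ‖x (t + 1) - x t‖) := by
      rw [← Finset.sum_sub_distrib]
      calc ∑ j, (⟪gradient (Lf j) (x t), x (t + 1) - x t⟫
            - ⟪gradient (Lf j) (x (tj t j)), x (t + 1) - x t⟫)
          ≤ ∑ _j : Fin m, L * S * ‖x (t + 1) - x t‖ :=
            Finset.sum_le_sum fun j _ => by rw [← inner_sub_left]; exact hgj j
        _ = (m:ℝ) * (L * S * ‖x (t + 1) - x t‖) := by
            rw [Finset.sum_const, Finset.card_univ, Fintype.card_fin, nsmul_eq_mul]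
    have hE : (m:ℝ)⁻¹ * ∑ j, ⟪gradient (Lf j) (x t), x (t + 1) - x t⟫
        - ⟪gradient (Lf ⟨0, hm⟩) (x t), x (t + 1) - x t⟫
        - ⟪w, x (t + 1) - x t⟫ ≤ 2 * (L * S * ‖x (t + 1) - x t‖) := by
      rw [hw_expand]
      have h1 := mul_le_mul_of_nonneg_left hEsum hminv
      have h1' : (m:ℝ)⁻¹ * ((m:ℝ) * (L * S * ‖x (t + 1) - x t‖))
          = L * S * ‖x (t + 1) - x t‖ := by rw [← mul_assoc, hm1, one_mul]
      rw [h1'] at h1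
      have h2 : ⟪gradient (Lf ⟨0, hm⟩) (x (tj t ⟨0, hm⟩)), x (t + 1) - x t⟫
          - ⟪gradient (Lf ⟨0, hm⟩) (x t), x (t + 1) - x t⟫ ≤ L * S * ‖x (t + 1) - x t‖ := by
        rw [← inner_sub_left]; exact hj0bound
      have h3 : (m:ℝ)⁻¹ * (∑ j, ⟪gradient (Lf j) (x t), x (t + 1) - x t⟫
          - ∑ j, ⟪gradient (Lf j) (x (tj t j)), x (t + 1) - x t⟫)
          = (m:ℝ)⁻¹ * ∑ j, ⟪gradient (Lf j) (x t), x (t + 1) - x t⟫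
          - (m:ℝ)⁻¹ * ∑ j, ⟪gradient (Lf j) (x (tj t j)), x (t + 1) - x t⟫ := by ring
      rw [h3] at h1
      linarith
    -- Young / split the cross term
    have hyoung : 2 * (L * S * ‖x (t + 1) - x t‖)
        ≤ L * δ * ∑ s ∈ Finset.Ico (t - τ) t, ‖x (s + 1) - x s‖ ^ 2
          + L * τ / δ * ‖x (t + 1) - x t‖ ^ 2 := by
      have h1 : 2 * (L * S * ‖x (t + 1) - x t‖)
          = (∑ s ∈ Finset.Ico (t - τ) t, ‖x (s + 1) - x s‖)
            * (2 * (L * ‖x (t + 1) - x t‖)) := by rw [hS_def]; ring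
      rw [Finset.sum_mul] at h1
      have h2 : ∑ s ∈ Finset.Ico (t - τ) t, ‖x (s + 1) - x s‖ * (2 * (L * ‖x (t + 1) - x t‖))
          ≤ ∑ s ∈ Finset.Ico (t - τ) t,
            (L * δ * ‖x (s + 1) - x s‖ ^ 2 + L / δ * ‖x (t + 1) - x t‖ ^ 2) :=
        Finset.sum_le_sum fun s _ => by
          linarith [young_aux (a := ‖x (s + 1) - x s‖) (b := ‖x (t + 1) - x t‖) hδ hL.le]
      have h3 : ∑ s ∈ Finset.Ico (t - τ) t,
            (L * δ * ‖x (s + 1) - x s‖ ^ 2 + L / δ * ‖x (t + 1) - x t‖ ^ 2)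
          = L * δ * ∑ s ∈ Finset.Ico (t - τ) t, ‖x (s + 1) - x s‖ ^ 2
            + ((t - (t - τ) : ℕ) : ℝ) * (L / δ * ‖x (t + 1) - x t‖ ^ 2) := by
        rw [Finset.sum_add_distrib, Finset.sum_const, Nat.card_Ico, nsmul_eq_mul,
          Finset.mul_sum]
      have h4 : ((t - (t - τ) : ℕ) : ℝ) ≤ (τ : ℝ) := by
        have : (t - (t - τ) : ℕ) ≤ τ := by omega
        exact_mod_cast this
      have h5 : ((t - (t - τ) : ℕ) : ℝ) * (L / δ * ‖x (t + 1) - x t‖ ^ 2)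
          ≤ L * τ / δ * ‖x (t + 1) - x t‖ ^ 2 := by
        have hnn : 0 ≤ L / δ * ‖x (t + 1) - x t‖ ^ 2 := by positivity
        calc ((t - (t - τ) : ℕ) : ℝ) * (L / δ * ‖x (t + 1) - x t‖ ^ 2)
            ≤ (τ : ℝ) * (L / δ * ‖x (t + 1) - x t‖ ^ 2) :=
              mul_le_mul_of_nonneg_right h4 hnn
          _ = L * τ / δ * ‖x (t + 1) - x t‖ ^ 2 := by ring
      linarith
    linarith [hA, hBavg, hB2, hE, hyoung]
  -- summation
  have hsum : ∀ T : ℕ, Lag (x T) - Lag (x 0) ≤ -c * (∑ t ∈ Finset.range T, d t)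
      + L * δ * ((τ : ℝ) * ∑ s ∈ Finset.range T, d s) := by
    intro T
    have h1 : Lag (x T) - Lag (x 0) = ∑ t ∈ Finset.range T, (Lag (x (t + 1)) - Lag (x t)) :=
      (Finset.sum_range_sub (fun t => Lag (x t)) T).symm
    rw [h1]
    calc ∑ t ∈ Finset.range T, (Lag (x (t + 1)) - Lag (x t))
        ≤ ∑ t ∈ Finset.range T, (-c * d t + L * δ * ∑ s ∈ Finset.Ico (t - τ) t, d s) :=
          Finset.sum_le_sum fun t _ => by linarith [key t]
      _ = -c * (∑ t ∈ Finset.range T, d t)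
          + L * δ * ∑ t ∈ Finset.range T, ∑ s ∈ Finset.Ico (t - τ) t, d s := by
          rw [Finset.sum_add_distrib, ← Finset.mul_sum, ← Finset.mul_sum]
      _ ≤ -c * (∑ t ∈ Finset.range T, d t)
          + L * δ * ((τ : ℝ) * ∑ s ∈ Finset.range T, d s) := by
          have h2 := double_sum_le_aux d hdnn τ T
          have h3 := mul_le_mul_of_nonneg_left h2 (by positivity : (0:ℝ) ≤ L * δ)
          linarith
  have hcpos : 0 < c - L * δ * τ := by linarith
  have hbd : ∀ T : ℕ, ∑ t ∈ Finset.range T, d t ≤ (Lag (x 0) - Llo) / (c - L * δ * τ) := by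
    intro T
    have h2 : Llo < Lag (x T) := hLlo (x T)
    have h3 := hsum T
    rw [le_div_iff₀ hcpos]
    nlinarith
  have hsummable : Summable d := summable_of_sum_range_le hdnn hbd
  have hd0 : Filter.Tendsto d Filter.atTop (nhds 0) := hsummable.tendsto_atTop_zero
  have hnorm0 : Filter.Tendsto (fun t => ‖x (t + 1) - x t‖) Filter.atTop (nhds 0) := by
    have h1 : Filter.Tendsto (fun t => Real.sqrt (d t)) Filter.atTop (nhds (Real.sqrt 0)) :=
      (Real.continuous_sqrt.tendsto 0).comp hd0
    rw [Real.sqrt_zero] at h1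
    have h2 : (fun t => ‖x (t + 1) - x t‖) = fun t => Real.sqrt (d t) := by
      funext t
      rw [hd_def]
      exact (Real.sqrt_sq (norm_nonneg _)).symm
    rw [h2]
    exact h1
  exact tendsto_zero_iff_norm_tendsto_zero.mpr hnorm0
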